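/- Let K be a field, S = K[x_1,...,x_n,y_1,...,y_n], and G a simple graph on [n]. The binomial edge ideal J_G = (x_i y_j − x_j y_i : {i,j} ∈ E(G), i<j) is a prime ideal if and only if every connected component of G restricted to its non-isolated vertices is a complete graph (equivalently, adjacency is transitive on G: if {i,j} and {j,k} are edges with i ≠ k, then {i,k} is an edge). -/

import Mathlib

open MvPolynomial

/-- The binomial `f_{ij} = x_i y_j - x_j y_i` in `K[x_1,…,x_n,y_1,…,y_n]`, where the
`x` variables are indexed by `Sum.inl` and the `y` variables by `Sum.inr`. -/
noncomputable def edgeBinomial (K : Type*) [Field K] {n : ℕ} (i j : Fin n) :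
    MvPolynomial (Fin n ⊕ Fin n) K :=
  X (Sum.inl i) * X (Sum.inr j) - X (Sum.inl j) * X (Sum.inr i)

/-- The binomial edge ideal `J_G` of a simple graph `G` on `[n]`. -/
noncomputable def binomialEdgeIdeal (K : Type*) [Field K] {n : ℕ}
    (G : SimpleGraph (Fin n)) : Ideal (MvPolynomial (Fin n ⊕ Fin n) K) :=
  Ideal.span {p | ∃ i j : Fin n, G.Adj i j ∧ i < j ∧ p = edgeBinomial K i j}

namespace BEI

attribute [local instance] Classical.propDecidable

variable {n : ℕ} (G : SimpleGraph (Fin n))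

def Rel (i j : Fin n) : Prop := i = j ∨ G.Adj i j

variable {G}

lemma Rel.refl (i : Fin n) : Rel G i i := Or.inl rfl

lemma Rel.symm' {i j : Fin n} (h : Rel G i j) : Rel G j i := by
  rcases h with h | h
  · exact Or.inl h.symm
  · exact Or.inr h.symm

variable (ht : ∀ i j k : Fin n, G.Adj i j → G.Adj j k → i ≠ k → G.Adj i k)
include ht

lemma Rel.trans' {i j k : Fin n} (h1 : Rel G i j) (h2 : Rel G j k) : Rel G i k := by
  rcases h1 with rfl | h1
  · exact h2
  · rcases h2 with rfl | h2
    · exact Or.inr h1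
    · by_cases hik : i = k
      · exact Or.inl hik
      · exact Or.inr (ht i j k h1 h2 hik)

omit ht

variable (G) in
noncomputable def rep (i : Fin n) : Fin n :=
  (Finset.univ.filter (Rel G i)).min' ⟨i, by simp [Rel.refl]⟩

lemma rep_rel (i : Fin n) : Rel G i (rep G i) := by
  have := Finset.min'_mem (Finset.univ.filter (Rel G i)) ⟨i, by simp [Rel.refl]⟩
  simpa [rep] using this

private lemma min'_congr {α : Type*} [LinearOrder α] (s t : Finset α) (h1 : s.Nonempty)
    (h2 : t.Nonempty) (h : s = t) : s.min' h1 = t.min' h2 := by subst h; rfl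

include ht

lemma rep_eq {i j : Fin n} (h : Rel G i j) : rep G i = rep G j := by
  refine min'_congr _ _ _ _ ?_
  ext a
  simp only [Finset.mem_filter, Finset.mem_univ, true_and]
  exact ⟨fun ha => (h.symm').trans' ht ha, fun ha => h.trans' ht ha⟩

lemma rel_of_rep_eq {i j : Fin n} (h : rep G i = rep G j) : Rel G i j :=
  (rep_rel i).trans' ht ((h ▸ rep_rel j).symm')

lemma adj_of_rep_eq {i j : Fin n} (h : rep G i = rep G j) (hne : i ≠ j) : G.Adj i j := by
  rcases rel_of_rep_eq ht h with h' | h'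
  · exact absurd h' hne
  · exact h'

omit ht

variable (G) in
/-- The invariant map on exponent vectors. -/
noncomputable def phi (e : (Fin n ⊕ Fin n) →₀ ℕ) : (Fin n ⊕ Fin n) →₀ ℕ :=
  Finsupp.equivFunOnFinite.symm (fun v => Sum.rec
    (fun i => e (Sum.inl i) + e (Sum.inr i))
    (fun c => ∑ j ∈ Finset.univ.filter (fun j => rep G j = c), e (Sum.inl j)) v)

@[simp] lemma phi_inl (e : (Fin n ⊕ Fin n) →₀ ℕ) (i : Fin n) :
    phi G e (Sum.inl i) = e (Sum.inl i) + e (Sum.inr i) := by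
  simp [phi]

@[simp] lemma phi_inr (e : (Fin n ⊕ Fin n) →₀ ℕ) (c : Fin n) :
    phi G e (Sum.inr c) = ∑ j ∈ Finset.univ.filter (fun j => rep G j = c), e (Sum.inl j) := by
  simp [phi]

lemma phi_add (e e' : (Fin n ⊕ Fin n) →₀ ℕ) : phi G (e + e') = phi G e + phi G e' := by
  ext v
  rcases v with i | c <;> simp [Finset.sum_add_distrib] <;> ring

lemma phi_zero : phi G (0 : (Fin n ⊕ Fin n) →₀ ℕ) = 0 := by
  ext v; rcases v with i | c <;> simp

variable (G) in
noncomputable def phiHom : ((Fin n ⊕ Fin n) →₀ ℕ) →+ ((Fin n ⊕ Fin n) →₀ ℕ) :=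
  ⟨⟨phi G, phi_zero⟩, phi_add⟩

@[simp] lemma phiHom_apply (e : (Fin n ⊕ Fin n) →₀ ℕ) : phiHom G e = phi G e := rfl

lemma phi_single_inl (i : Fin n) (m : ℕ) :
    phi G (Finsupp.single (Sum.inl i) m) =
      Finsupp.single (Sum.inl i) m + Finsupp.single (Sum.inr (rep G i)) m := by
  ext v
  rcases v with v | c
  · simp [Finsupp.single_apply]
  · simp only [phi_inr, Finsupp.add_apply, Finsupp.single_apply, Sum.inr.injEq]
    rw [Finset.sum_filter]
    rw [Finset.sum_congr rfl (fun j _ =>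
      show (if rep G j = c then (if Sum.inl i = Sum.inl j then m else 0) else 0)
          = if i = j then (if rep G j = c then m else 0) else 0 by
        split_ifs <;> simp_all)]
    rw [Finset.sum_ite_eq]
    simp only [Finset.mem_univ, if_true]
    split_ifs <;> simp_all

lemma phi_single_inr (i : Fin n) (m : ℕ) :
    phi G (Finsupp.single (Sum.inr i) m) = Finsupp.single (Sum.inl i) m := by
  ext v
  rcases v with v | c
  · simp [Finsupp.single_apply]
  · simp [Finsupp.single_apply]

variable (K : Type*) [Field K]

variable (G) in
/-- The toric map whose kernel is `J_G` (when adjacency is transitive). -/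
noncomputable def Fhom : MvPolynomial (Fin n ⊕ Fin n) K →+* MvPolynomial (Fin n ⊕ Fin n) K :=
  AddMonoidAlgebra.mapDomainRingHom K (phiHom G)

lemma Fhom_monomial (e : (Fin n ⊕ Fin n) →₀ ℕ) (c : K) :
    Fhom G K (monomial e c) = monomial (phi G e) c := by
  rw [← single_eq_monomial, ← single_eq_monomial]
  show AddMonoidAlgebra.mapDomain (phiHom G) (AddMonoidAlgebra.single e c) = _
  rw [AddMonoidAlgebra.mapDomain_single, phiHom_apply]

lemma edgeBinomial_eq (i j : Fin n) :
    edgeBinomial K i j =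
      monomial (Finsupp.single (Sum.inl i) 1 + Finsupp.single (Sum.inr j) 1) (1:K)
      - monomial (Finsupp.single (Sum.inl j) 1 + Finsupp.single (Sum.inr i) 1) (1:K) := by
  rw [edgeBinomial, X, X, X, X, monomial_mul, monomial_mul, one_mul]

include ht in
lemma span_le_ker :
    binomialEdgeIdeal K G ≤ RingHom.ker (Fhom G K) := by
  rw [binomialEdgeIdeal, Ideal.span_le]
  rintro p ⟨i, j, hadj, hlt, rfl⟩
  have hrep : rep G i = rep G j := rep_eq ht (Or.inr hadj)
  simp only [SetLike.mem_coe, RingHom.mem_ker, edgeBinomial_eq, map_sub, Fhom_monomial,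
    phi_add, phi_single_inl, phi_single_inr, hrep, sub_eq_zero]
  congr 1; abel

variable (G) in
lemma edgeBinomial_mem' {i j : Fin n} (hadj : G.Adj i j) :
    edgeBinomial K i j ∈ binomialEdgeIdeal K G := by
  rcases lt_trichotomy i j with h | h | h
  · exact Ideal.subset_span ⟨i, j, hadj, h, rfl⟩
  · exact absurd h hadj.ne
  · have : edgeBinomial K i j = -(edgeBinomial K j i) := by
      unfold edgeBinomial; ring
    rw [this]
    exact neg_mem (Ideal.subset_span ⟨j, i, hadj.symm, h, rfl⟩)

lemma swap_step {i j : Fin n} (hadj : G.Adj i j) (e0 : (Fin n ⊕ Fin n) →₀ ℕ) :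
    (monomial (e0 + Finsupp.single (Sum.inl i) 1 + Finsupp.single (Sum.inr j) 1) (1:K)
      - monomial (e0 + Finsupp.single (Sum.inl j) 1 + Finsupp.single (Sum.inr i) 1) (1:K))
      ∈ binomialEdgeIdeal K G := by
  have key : (monomial (e0 + Finsupp.single (Sum.inl i) 1 + Finsupp.single (Sum.inr j) 1) (1:K)
      - monomial (e0 + Finsupp.single (Sum.inl j) 1 + Finsupp.single (Sum.inr i) 1) (1:K))
      = monomial e0 1 * edgeBinomial K i j := by
    rw [edgeBinomial_eq, mul_sub, monomial_mul, monomial_mul, one_mul]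
    congr 2 <;> abel
  rw [key]
  exact Ideal.mul_mem_left _ _ (edgeBinomial_mem' G K hadj)

include ht in
lemma crux (N : ℕ) : ∀ e e' : (Fin n ⊕ Fin n) →₀ ℕ,
    (∑ i : Fin n, Nat.dist (e (Sum.inl i)) (e' (Sum.inl i))) = N →
    phi G e = phi G e' →
    (monomial e (1:K) - monomial e' 1) ∈ binomialEdgeIdeal K G := by
  induction N using Nat.strong_induction_on with
  | _ N IH =>
  have main : ∀ e e' : (Fin n ⊕ Fin n) →₀ ℕ,
      (∑ i : Fin n, Nat.dist (e (Sum.inl i)) (e' (Sum.inl i))) = N →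
      phi G e = phi G e' →
      (∃ i, e' (Sum.inl i) < e (Sum.inl i)) →
      (monomial e (1:K) - monomial e' 1) ∈ binomialEdgeIdeal K G := by
    rintro e e' hsum hphi ⟨i, hi⟩
    have hsum_cls : ∑ j ∈ Finset.univ.filter (fun j => rep G j = rep G i), e (Sum.inl j)
        = ∑ j ∈ Finset.univ.filter (fun j => rep G j = rep G i), e' (Sum.inl j) := by
      have h := congrArg (fun f : (Fin n ⊕ Fin n) →₀ ℕ => f (Sum.inr (rep G i))) hphi
      simpa [phi_inr] using h
    have hex : ∃ j ∈ Finset.univ.filter (fun j => rep G j = rep G i),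
        e (Sum.inl j) < e' (Sum.inl j) := by
      by_contra hno
      push_neg at hno
      have hlt := Finset.sum_lt_sum hno ⟨i, by simp, hi⟩
      omega
    obtain ⟨j, hjmem, hj⟩ := hex
    have hrep : rep G j = rep G i := by
      simpa using hjmem
    have hij : i ≠ j := by rintro rfl; omega
    have hadj : G.Adj i j := adj_of_rep_eq ht hrep.symm hij
    have hdi : phi G e (Sum.inl i) = phi G e' (Sum.inl i) := by rw [hphi]
    have hdj : phi G e (Sum.inl j) = phi G e' (Sum.inl j) := by rw [hphi]
    rw [phi_inl, phi_inl] at hdi hdj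
    have hei : 1 ≤ e (Sum.inl i) := by omega
    have hej : 1 ≤ e (Sum.inr j) := by omega
    set e0 : (Fin n ⊕ Fin n) →₀ ℕ :=
      e - Finsupp.single (Sum.inl i) 1 - Finsupp.single (Sum.inr j) 1 with he0
    have he0_apply : ∀ v, e0 v = e v - Finsupp.single (Sum.inl i) 1 v
        - Finsupp.single (Sum.inr j) 1 v := by
      intro v; simp [he0, Finsupp.tsub_apply]
    have he : e = e0 + Finsupp.single (Sum.inl i) 1 + Finsupp.single (Sum.inr j) 1 := by
      ext v
      have h0 := he0_apply v
      rcases v with v | v <;>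
        simp only [Finsupp.add_apply, Finsupp.single_apply, Sum.inl.injEq, Sum.inr.injEq,
          reduceCtorEq, if_false] at h0 ⊢ <;> split_ifs at h0 ⊢ with h1 <;>
        first
          | (subst h1; omega)
          | omega
    set e2 : (Fin n ⊕ Fin n) →₀ ℕ :=
      e0 + Finsupp.single (Sum.inl j) 1 + Finsupp.single (Sum.inr i) 1 with he2
    have step1 : (monomial e (1:K) - monomial e2 1) ∈ binomialEdgeIdeal K G := by
      rw [he, he2]
      exact swap_step K hadj e0
    have hphikey : phi G (Finsupp.single (Sum.inl i) 1) + phi G (Finsupp.single (Sum.inr j) 1)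
        = phi G (Finsupp.single (Sum.inl j) 1) + phi G (Finsupp.single (Sum.inr i) 1) := by
      rw [phi_single_inl, phi_single_inr, phi_single_inl, phi_single_inr, hrep]
      abel
    have hphi2 : phi G e2 = phi G e := by
      rw [he2, phi_add, phi_add]
      conv_rhs => rw [he]
      rw [phi_add, phi_add, add_assoc, add_assoc, hphikey]
    have he2_apply : ∀ v : Fin n, e2 (Sum.inl v)
        = e (Sum.inl v) - (if v = i then 1 else 0) + (if v = j then 1 else 0) := by
      intro v
      have s1 : (Finsupp.single (Sum.inl i) 1 : (Fin n ⊕ Fin n) →₀ ℕ) (Sum.inl v) = if v = i then 1 else 0 := by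
        simp [Finsupp.single_apply, eq_comm]
      have s2 : (Finsupp.single (Sum.inr j) 1 : (Fin n ⊕ Fin n) →₀ ℕ) (Sum.inl v) = 0 := by simp
      have s3 : (Finsupp.single (Sum.inl j) 1 : (Fin n ⊕ Fin n) →₀ ℕ) (Sum.inl v) = if v = j then 1 else 0 := by
        simp [Finsupp.single_apply, eq_comm]
      have s4 : (Finsupp.single (Sum.inr i) 1 : (Fin n ⊕ Fin n) →₀ ℕ) (Sum.inl v) = 0 := by simp
      have h0 := he0_apply (Sum.inl v)
      rw [s1, s2] at h0
      simp only [he2, Finsupp.add_apply, s3, s4, h0]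
      split_ifs <;> omega
    have hconst : ∑ v : Fin n, ((if v = i then 1 else 0) + (if v = j then 1 else 0)) = 2 := by
      rw [Finset.sum_add_distrib, Finset.sum_ite_eq' Finset.univ i (fun _ => 1),
        Finset.sum_ite_eq' Finset.univ j (fun _ => 1)]
      simp
    have hN2 : (∑ v : Fin n, Nat.dist (e2 (Sum.inl v)) (e' (Sum.inl v))) + 2 = N := by
      rw [← hsum, ← hconst, ← Finset.sum_add_distrib]
      refine Finset.sum_congr rfl fun v _ => ?_
      have h2v := he2_apply v
      rcases eq_or_ne v i with rfl | h1
      · rw [if_pos rfl, if_neg hij] at h2v ⊢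
        simp only [Nat.dist] at h2v ⊢
        omega
      · rcases eq_or_ne v j with rfl | h2
        · rw [if_neg h1, if_pos rfl] at h2v ⊢
          simp only [Nat.dist] at h2v ⊢
          omega
        · rw [if_neg h1, if_neg h2] at h2v ⊢
          simp only [Nat.dist] at h2v ⊢
          omega
    have step2 : (monomial e2 (1:K) - monomial e' 1) ∈ binomialEdgeIdeal K G :=
      IH _ (by omega) e2 e' rfl (hphi2.trans hphi)
    have hsplit : monomial e (1:K) - monomial e' 1
        = (monomial e 1 - monomial e2 1) + (monomial e2 1 - monomial e' 1) := by ring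
    rw [hsplit]
    exact Ideal.add_mem _ step1 step2
  intro e e' hsum hphi
  by_cases hall : ∀ i : Fin n, e (Sum.inl i) = e' (Sum.inl i)
  · have hee : e = e' := by
      ext v
      rcases v with v | v
      · exact hall v
      · have h := congrArg (fun f : (Fin n ⊕ Fin n) →₀ ℕ => f (Sum.inl v)) hphi
        simp only [phi_inl] at h
        have := hall v
        omega
    rw [hee, sub_self]
    exact Ideal.zero_mem _
  · push_neg at hall
    obtain ⟨i, hi⟩ := hall
    rcases lt_or_gt_of_ne hi with h | h
    · have mem' := main e' e (by rw [← hsum]; exact Finset.sum_congr rfl fun v _ => Nat.dist_comm _ _)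
        hphi.symm ⟨i, h⟩
      have : monomial e (1:K) - monomial e' 1 = -(monomial e' 1 - monomial e 1) := by ring
      rw [this]
      exact neg_mem mem'
    · exact main e e' hsum hphi ⟨i, h⟩

include ht in
lemma ker_le_span_aux (N : ℕ) : ∀ p : MvPolynomial (Fin n ⊕ Fin n) K,
    p.support.card = N → Fhom G K p = 0 → p ∈ binomialEdgeIdeal K G := by
  induction N using Nat.strong_induction_on with
  | _ N IH =>
  intro p hcard hker
  rcases eq_or_ne p 0 with rfl | hp0
  · exact Ideal.zero_mem _
  obtain ⟨e₀, he₀⟩ := Finset.nonempty_iff_ne_empty.mpr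
    (fun h => hp0 (MvPolynomial.support_eq_empty.mp h))
  set m := phi G e₀ with hm
  set fib := p.support.filter (fun e => phi G e = m) with hfib
  have he₀fib : e₀ ∈ fib := by
    rw [hfib, Finset.mem_filter]
    exact ⟨he₀, rfl⟩
  have h1 : Fhom G K p = ∑ e ∈ p.support, monomial (phi G e) (p.coeff e) := by
    conv_lhs => rw [← MvPolynomial.support_sum_monomial_coeff p]
    rw [map_sum]
    exact Finset.sum_congr rfl fun e _ => Fhom_monomial K e _
  have hfibsum : ∑ e ∈ fib, p.coeff e = 0 := by
    have h2 : MvPolynomial.coeff m (Fhom G K p) = 0 := by rw [hker]; simp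
    rw [h1, MvPolynomial.coeff_sum] at h2
    simp only [MvPolynomial.coeff_monomial] at h2
    rwa [hfib, Finset.sum_filter]
  set p₁ : MvPolynomial (Fin n ⊕ Fin n) K :=
    ∑ e ∈ fib, C (p.coeff e) * (monomial e 1 - monomial e₀ 1) with hp₁
  have hp₁mem : p₁ ∈ binomialEdgeIdeal K G := by
    refine Ideal.sum_mem _ fun e he => Ideal.mul_mem_left _ _ ?_
    refine crux ht K _ e e₀ rfl ?_
    rw [hfib, Finset.mem_filter] at he
    exact he.2
  have hp₁eq : p₁ = ∑ e ∈ fib, monomial e (p.coeff e) := by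
    rw [hp₁]
    simp only [mul_sub, Finset.sum_sub_distrib]
    have hB : ∑ e ∈ fib, C (p.coeff e) * monomial e₀ (1:K) = 0 := by
      rw [← Finset.sum_mul, ← map_sum, hfibsum, map_zero, zero_mul]
    rw [hB, sub_zero]
    exact Finset.sum_congr rfl fun e _ => by rw [C_mul_monomial, mul_one]
  have hcoeff : ∀ e, (p - p₁).coeff e = if e ∈ fib then 0 else p.coeff e := by
    intro e
    rw [MvPolynomial.coeff_sub, hp₁eq, MvPolynomial.coeff_sum]
    simp only [MvPolynomial.coeff_monomial]
    rw [Finset.sum_ite_eq' fib e (fun e' => p.coeff e')]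
    split_ifs with h
    · exact sub_self _
    · exact sub_zero _
  have hsubset : (p - p₁).support ⊆ p.support \ fib := by
    intro e he
    rw [MvPolynomial.mem_support_iff, hcoeff] at he
    by_cases hef : e ∈ fib
    · rw [if_pos hef] at he; exact absurd rfl he
    · rw [if_neg hef] at he
      rw [Finset.mem_sdiff]
      exact ⟨MvPolynomial.mem_support_iff.mpr he, hef⟩
  have hcard2 : (p - p₁).support.card < N := by
    calc (p - p₁).support.card ≤ (p.support \ fib).card := Finset.card_le_card hsubset
    _ < p.support.card := Finset.card_lt_card
        (Finset.sdiff_ssubset (Finset.filter_subset _ _) ⟨e₀, he₀fib⟩)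
    _ = N := hcard
  have hker2 : Fhom G K (p - p₁) = 0 := by
    rw [map_sub, hker, zero_sub, neg_eq_zero]
    exact RingHom.mem_ker.mp (span_le_ker ht K hp₁mem)
  have hmem2 := IH _ hcard2 (p - p₁) rfl hker2
  have : p = (p - p₁) + p₁ := by ring
  rw [this]
  exact Ideal.add_mem _ hmem2 hp₁mem

include ht in
lemma ker_le_span : RingHom.ker (Fhom G K) ≤ binomialEdgeIdeal K G := fun p hp =>
  ker_le_span_aux ht K _ p rfl (RingHom.mem_ker.mp hp)

variable (G) in
lemma edgeBinomial_mem {i j : Fin n} (hadj : G.Adj i j) :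
    edgeBinomial K i j ∈ binomialEdgeIdeal K G := by
  rcases lt_trichotomy i j with h | h | h
  · exact Ideal.subset_span ⟨i, j, hadj, h, rfl⟩
  · exact absurd h hadj.ne
  · have : edgeBinomial K i j = -(edgeBinomial K j i) := by
      unfold edgeBinomial; ring
    rw [this]
    exact neg_mem (Ideal.subset_span ⟨j, i, hadj.symm, h, rfl⟩)

variable (G) in
lemma X_not_mem (j : Fin n) :
    (X (Sum.inl j) : MvPolynomial (Fin n ⊕ Fin n) K) ∉ binomialEdgeIdeal K G := by
  intro hmem
  have hker : binomialEdgeIdeal K G ≤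
      RingHom.ker (aeval (Sum.elim (fun _ => (1:K)) (fun _ => 0)) : MvPolynomial (Fin n ⊕ Fin n) K →ₐ[K] K) := by
    rw [binomialEdgeIdeal, Ideal.span_le]
    rintro p ⟨a, b, hab, hlt, rfl⟩
    simp [RingHom.mem_ker, edgeBinomial]
  have := hker hmem
  simp [RingHom.mem_ker] at this

variable (G) in
lemma edgeBinomial_not_mem {i k : Fin n} (hne : i ≠ k) (hnadj : ¬ G.Adj i k) :
    edgeBinomial K i k ∉ binomialEdgeIdeal K G := by
  intro hmem
  set w : Fin n ⊕ Fin n → K :=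
    Sum.elim (fun a => if a = i then (1:K) else 0) (fun a => if a = k then (1:K) else 0) with hw
  have hker : binomialEdgeIdeal K G ≤
      RingHom.ker (aeval w : MvPolynomial (Fin n ⊕ Fin n) K →ₐ[K] K) := by
    rw [binomialEdgeIdeal, Ideal.span_le]
    rintro p ⟨a, b, hab, hlt, rfl⟩
    simp only [SetLike.mem_coe, RingHom.mem_ker, edgeBinomial, map_sub, map_mul, aeval_X, hw,
      Sum.elim_inl, Sum.elim_inr]
    split_ifs <;> simp_all [SimpleGraph.adj_comm]
  have := hker hmem
  rw [RingHom.mem_ker] at this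
  simp [edgeBinomial, hw, hne, Ne.symm hne] at this

variable (G) in
lemma prime_imp_trans (hp : (binomialEdgeIdeal K G).IsPrime) :
    ∀ i j k : Fin n, G.Adj i j → G.Adj j k → i ≠ k → G.Adj i k := by
  intro i j k hij hjk hik
  by_contra hnadj
  have hid : (X (Sum.inl j) : MvPolynomial (Fin n ⊕ Fin n) K) * edgeBinomial K i k
      = X (Sum.inl i) * edgeBinomial K j k + X (Sum.inl k) * edgeBinomial K i j := by
    unfold edgeBinomial; ring
  have hmem : (X (Sum.inl j) : MvPolynomial (Fin n ⊕ Fin n) K) * edgeBinomial K i k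
      ∈ binomialEdgeIdeal K G := by
    rw [hid]
    exact Ideal.add_mem _ (Ideal.mul_mem_left _ _ (edgeBinomial_mem G K hjk))
      (Ideal.mul_mem_left _ _ (edgeBinomial_mem G K hij))
  rcases hp.mem_or_mem hmem with h | h
  · exact X_not_mem G K j h
  · exact edgeBinomial_not_mem G K hik hnadj h

include ht in
theorem trans_imp_prime : (binomialEdgeIdeal K G).IsPrime := by
  have hker : binomialEdgeIdeal K G = RingHom.ker (Fhom G K) :=
    le_antisymm (span_le_ker ht K) (ker_le_span ht K)
  rw [hker]
  exact RingHom.ker_isPrime _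

end BEI

/-- `J_G` is a prime ideal if and only if adjacency is transitive on `G`, i.e. every
connected component of `G` (restricted to its non-isolated vertices) is complete. -/
theorem binomialEdgeIdeal_isPrime_iff (K : Type*) [Field K] {n : ℕ}
    (G : SimpleGraph (Fin n)) :
    (binomialEdgeIdeal K G).IsPrime ↔
      ∀ i j k : Fin n, G.Adj i j → G.Adj j k → i ≠ k → G.Adj i k := by
  constructor
  · exact fun hp => BEI.prime_imp_trans G K hp
  · exact fun ht => BEI.trans_imp_prime ht K
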